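/- Let G be a graph and let G* be obtained from G by a Kelmans transformation at vertices u, v. Then the signless Laplacian spectral radius satisfies q(G) ≤ q(G*). -/

import Mathlib

open Classical SimpleGraph

noncomputable section

/-- Degree of a vertex (via `Set.ncard`, avoiding decidability assumptions). -/
noncomputable def gdeg {V : Type*} (G : SimpleGraph V) (v : V) : ℕ :=
  (G.neighborSet v).ncard

/-- A graph is Hamilton-connected if every two distinct vertices are joined by a
Hamiltonian path. -/
def HamConnected {V : Type*} (G : SimpleGraph V) : Prop :=
  ∀ u v : V, u ≠ v → ∃ p : G.Walk u v, p.IsHamiltonian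

/-- The signless Laplacian matrix `Q(G) = D(G) + A(G)`. -/
noncomputable def signlessLap {V : Type*} [Fintype V] [DecidableEq V] (G : SimpleGraph V) :
    Matrix V V ℝ :=
  Matrix.of fun i j => (if i = j then (gdeg G i : ℝ) else 0) + (if G.Adj i j then 1 else 0)

/-- The signless Laplacian spectral radius: largest eigenvalue of `Q(G)`. -/
noncomputable def qrad {V : Type*} [Fintype V] [DecidableEq V] (G : SimpleGraph V) : ℝ :=
  sSup (spectrum ℝ (signlessLap G))

/-- The Kelmans transformation of `G` at vertices `u, v`: every edge `vx` with
`x ∈ N(v) \ N[u]` is replaced by the edge `ux`. -/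
noncomputable def kelmans {V : Type*} (G : SimpleGraph V) (u v : V) : SimpleGraph V :=
  SimpleGraph.fromRel (fun x y =>
    (G.Adj x y ∧ ¬ (x = v ∧ y ∈ G.neighborSet v \ insert u (G.neighborSet u)) ∧
      ¬ (y = v ∧ x ∈ G.neighborSet v \ insert u (G.neighborSet u))) ∨
    (x = u ∧ y ∈ G.neighborSet v \ insert u (G.neighborSet u)))

open Matrix

/-! ### Auxiliary spectral theory -/

section Aux

open Matrix

set_option linter.unusedSectionVars false

variable {V : Type*} [Fintype V] [DecidableEq V]

theorem spec_eq_range {M : Matrix V V ℝ}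
    (hM : M.IsHermitian) : spectrum ℝ M = Set.range hM.eigenvalues := by
  conv_lhs => rw [hM.spectral_theorem, Unitary.conjStarAlgAut_apply]
  have h1 : (star (hM.eigenvectorUnitary : Matrix V V ℝ))
      = ((Unitary.toUnits hM.eigenvectorUnitary)⁻¹ : (Matrix V V ℝ)ˣ) := rfl
  have h2 : (hM.eigenvectorUnitary : Matrix V V ℝ)
      = ((Unitary.toUnits hM.eigenvectorUnitary : (Matrix V V ℝ)ˣ) : Matrix V V ℝ) := rfl
  rw [h1, h2, spectrum.units_conjugate]
  have := spectrum_diagonal (R := ℝ) (RCLike.ofReal ∘ hM.eigenvalues)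
  simpa using this

theorem star_mulVec_eq {U : Matrix V V ℝ} (x : V → ℝ) : (star U) *ᵥ x = x ᵥ* U := by
  ext i
  simp [Matrix.mulVec, Matrix.vecMul, dotProduct, mul_comm]

theorem rayleigh_upper [Nonempty V] {M : Matrix V V ℝ} (hM : M.IsHermitian)
    (x : V → ℝ) (hx : x ⬝ᵥ x = 1) : x ⬝ᵥ (M *ᵥ x) ≤ sSup (spectrum ℝ M) := by
  classical
  set U := (hM.eigenvectorUnitary : Matrix V V ℝ) with hU
  set d := hM.eigenvalues with hd
  obtain ⟨i₀, -, hi₀⟩ := Finset.exists_max_image Finset.univ d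
    ⟨Classical.arbitrary V, Finset.mem_univ _⟩
  set c := (star U) *ᵥ x with hc
  have hcc : c ⬝ᵥ c = 1 := by
    have h3 : c ⬝ᵥ c = (x ᵥ* U) ⬝ᵥ ((star U) *ᵥ x) := by rw [hc, star_mulVec_eq]
    rw [h3, ← dotProduct_mulVec, Matrix.mulVec_mulVec,
      (Matrix.mem_unitaryGroup_iff).mp hM.eigenvectorUnitary.2, Matrix.one_mulVec, hx]
  have hform : x ⬝ᵥ (M *ᵥ x) = ∑ i, d i * c i ^ 2 := by
    conv_lhs => rw [hM.spectral_theorem, Unitary.conjStarAlgAut_apply]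
    rw [← Matrix.mulVec_mulVec, ← Matrix.mulVec_mulVec, dotProduct_mulVec (A := U),
      ← star_mulVec_eq]
    simp only [← hc]
    simp [dotProduct, Matrix.mulVec_diagonal]
    ring_nf
    exact Finset.sum_congr rfl fun i _ => by ring
  have h1 : x ⬝ᵥ (M *ᵥ x) ≤ d i₀ := by
    rw [hform]
    calc ∑ i, d i * c i ^ 2 ≤ ∑ i, d i₀ * c i ^ 2 := by
          apply Finset.sum_le_sum
          intro i _
          exact mul_le_mul_of_nonneg_right (hi₀ i (Finset.mem_univ i)) (sq_nonneg _)
      _ = d i₀ := by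
          rw [← Finset.mul_sum]
          have : ∑ i, c i ^ 2 = 1 := by
            rw [← hcc]; simp [dotProduct, sq]
          rw [this, mul_one]
  refine h1.trans (le_csSup ?_ ?_)
  · rw [spec_eq_range hM]; exact (Set.finite_range _).bddAbove
  · rw [spec_eq_range hM]; exact ⟨i₀, rfl⟩

theorem rayleigh_lower [Nonempty V] {M : Matrix V V ℝ} (hM : M.IsHermitian) :
    ∃ x : V → ℝ, x ⬝ᵥ x = 1 ∧ sSup (spectrum ℝ M) ≤ x ⬝ᵥ (M *ᵥ x) := by
  classical
  obtain ⟨i₀, -, hi₀⟩ := Finset.exists_max_image Finset.univ hM.eigenvalues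
    ⟨Classical.arbitrary V, Finset.mem_univ _⟩
  set w : V → ℝ := ⇑(hM.eigenvectorBasis i₀) with hw
  have hmv : M *ᵥ w = hM.eigenvalues i₀ • w := hM.mulVec_eigenvectorBasis i₀
  have hnorm : w ⬝ᵥ w = 1 := by
    have h := hM.eigenvectorBasis.orthonormal.1 i₀
    have h2 : (inner ℝ (hM.eigenvectorBasis i₀) (hM.eigenvectorBasis i₀) : ℝ) = 1 := by
      rw [real_inner_self_eq_norm_sq, h]; norm_num
    rw [← h2, PiLp.inner_apply]
    simp [dotProduct, RCLike.inner_apply, mul_comm]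
    simp [hw, sq]
  refine ⟨w, hnorm, ?_⟩
  have : w ⬝ᵥ (M *ᵥ w) = hM.eigenvalues i₀ := by
    rw [hmv, dotProduct_smul, smul_eq_mul, hnorm, mul_one]
  rw [this]
  apply csSup_le
  · rw [spec_eq_range hM]; exact Set.range_nonempty _
  · intro μ hμ
    rw [spec_eq_range hM] at hμ
    obtain ⟨i, rfl⟩ := hμ
    exact hi₀ i (Finset.mem_univ i)

/-- the signless Laplacian is symmetric -/
theorem lap_herm (G : SimpleGraph V) : (signlessLap G).IsHermitian := by
  rw [Matrix.IsHermitian]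
  ext i j
  simp only [Matrix.conjTranspose_apply, star_trivial, signlessLap, Matrix.of_apply]
  by_cases h : i = j
  · subst h; rfl
  · have h' : ¬ j = i := fun hh => h hh.symm
    simp [h, h', G.adj_comm i j]

/-- the signless Laplacian has nonnegative entries -/
theorem lap_nonneg (G : SimpleGraph V) (i j : V) : 0 ≤ signlessLap G i j := by
  simp only [signlessLap, Matrix.of_apply]
  apply add_nonneg <;> split_ifs <;> positivity

/-- taking absolute values cannot decrease the quadratic form of an
entrywise-nonnegative matrix -/
theorem dot_abs_le {M : Matrix V V ℝ} (hM : ∀ i j, 0 ≤ M i j) (x : V → ℝ) :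
    x ⬝ᵥ (M *ᵥ x) ≤ (fun i => |x i|) ⬝ᵥ (M *ᵥ fun i => |x i|) := by
  simp only [dotProduct, Matrix.mulVec]
  apply Finset.sum_le_sum
  intro i _
  simp only [dotProduct, Finset.mul_sum]
  apply Finset.sum_le_sum
  intro j _
  calc x i * (M i j * x j) ≤ |x i * (M i j * x j)| := le_abs_self _
    _ = |x i| * (M i j * |x j|) := by
        rw [abs_mul, abs_mul, abs_of_nonneg (hM i j)]

/-! ### Auxiliary combinatorics -/

/-- moved-vertex predicate for the Kelmans transformation -/
def kP {W : Type*} (G : SimpleGraph W) (u v w : W) : Prop :=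
  G.Adj v w ∧ ¬ w = u ∧ ¬ G.Adj u w

set_option maxHeartbeats 2000000 in
lemma kelmans_adj {W : Type*} (G : SimpleGraph W) (u v a b : W) :
    (kelmans G u v).Adj a b ↔ a ≠ b ∧
      ((G.Adj a b ∧ ¬(a = v ∧ kP G u v b) ∧ ¬(b = v ∧ kP G u v a)) ∨
       (a = u ∧ kP G u v b) ∨ (b = u ∧ kP G u v a)) := by
  have hc : G.Adj a b ↔ G.Adj b a := G.adj_comm a b
  simp only [kelmans, SimpleGraph.fromRel_adj, Set.mem_diff, SimpleGraph.mem_neighborSet,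
    Set.mem_insert_iff, kP, not_or]
  tauto

lemma gdeg_cast (G : SimpleGraph V) (i : V) :
    (gdeg G i : ℝ) = ∑ j, if G.Adj i j then (1:ℝ) else 0 := by
  rw [gdeg, Set.ncard_eq_toFinset_card _ (Set.toFinite _)]
  have h : (Set.toFinite (G.neighborSet i)).toFinset
      = Finset.univ.filter (fun j => G.Adj i j) := by
    ext j; simp
  rw [h, Finset.card_filter]
  push_cast
  exact Finset.sum_congr rfl fun j _ => by split_ifs <;> simp

/-- (twice) the quadratic form of the signless Laplacian, summed over ordered pairs -/
def qform (G : SimpleGraph V) (x : V → ℝ) : ℝ :=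
  ∑ i, ∑ j, if G.Adj i j then (x i + x j)^2 else 0

lemma two_dot_eq_qform (G : SimpleGraph V) (x : V → ℝ) :
    2 * (x ⬝ᵥ (signlessLap G *ᵥ x)) = qform G x := by
  have hdot : x ⬝ᵥ (signlessLap G *ᵥ x)
      = (∑ i, ∑ j, if G.Adj i j then x i ^ 2 else 0)
        + (∑ i, ∑ j, if G.Adj i j then x i * x j else 0) := by
    rw [dotProduct, ← Finset.sum_add_distrib]
    refine Finset.sum_congr rfl fun i _ => ?_
    rw [Matrix.mulVec, dotProduct]
    have h1 : ∑ j, signlessLap G i j * x j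
        = (gdeg G i : ℝ) * x i + ∑ j, (if G.Adj i j then 1 else 0) * x j := by
      simp only [signlessLap, Matrix.of_apply, add_mul, Finset.sum_add_distrib]
      congr 1
      simp [ite_mul]
    rw [h1, mul_add, gdeg_cast, Finset.sum_mul, Finset.mul_sum, Finset.mul_sum]
    congr 1
    · exact Finset.sum_congr rfl fun j _ => by split_ifs <;> ring
    · exact Finset.sum_congr rfl fun j _ => by split_ifs <;> ring
  have hswap : (∑ i, ∑ j, if G.Adj i j then x j ^ 2 else 0)
      = ∑ i, ∑ j, if G.Adj i j then x i ^ 2 else 0 := by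
    rw [Finset.sum_comm]
    refine Finset.sum_congr rfl fun i _ => Finset.sum_congr rfl fun j _ => ?_
    simp [G.adj_comm i j]
  have hq : qform G x = (∑ i, ∑ j, if G.Adj i j then x i ^ 2 else 0)
      + (∑ i, ∑ j, if G.Adj i j then x j ^ 2 else 0)
      + 2 * (∑ i, ∑ j, if G.Adj i j then x i * x j else 0) := by
    rw [qform]
    rw [Finset.mul_sum, ← Finset.sum_add_distrib, ← Finset.sum_add_distrib]
    refine Finset.sum_congr rfl fun i _ => ?_
    rw [Finset.mul_sum, ← Finset.sum_add_distrib, ← Finset.sum_add_distrib]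
    refine Finset.sum_congr rfl fun j _ => ?_
    split_ifs <;> ring
  rw [hdot, hq, hswap]
  ring

lemma qform_eq_sum_filter (H : SimpleGraph V) (x : V → ℝ) :
    qform H x = ∑ p ∈ (Finset.univ ×ˢ Finset.univ).filter
      (fun p : V × V => H.Adj p.1 p.2), (x p.1 + x p.2)^2 := by
  rw [qform, Finset.sum_filter, Finset.sum_product]

lemma qform_le_kelmans (G : SimpleGraph V) (u v : V) (x : V → ℝ)
    (hx : ∀ i, 0 ≤ x i) (huv : x v ≤ x u) :
    qform G x ≤ qform (kelmans G u v) x := by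
  classical
  set S := (Finset.univ ×ˢ Finset.univ).filter (fun p : V × V => G.Adj p.1 p.2) with hS
  set T := (Finset.univ ×ˢ Finset.univ).filter
    (fun p : V × V => (kelmans G u v).Adj p.1 p.2) with hT
  set φ : V × V → V × V := fun p =>
    if p.1 = v ∧ kP G u v p.2 then (u, p.2)
    else if p.2 = v ∧ kP G u v p.1 then (p.1, u) else p with hφ
  have hadjS : ∀ p ∈ S, G.Adj p.1 p.2 := by
    intro p hp; exact (Finset.mem_filter.mp hp).2
  have hcase : ∀ p : V × V, G.Adj p.1 p.2 →
      (p.1 = v ∧ kP G u v p.2 ∧ φ p = (u, p.2)) ∨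
      (p.2 = v ∧ kP G u v p.1 ∧ φ p = (p.1, u)) ∨
      (¬(p.1 = v ∧ kP G u v p.2) ∧ ¬(p.2 = v ∧ kP G u v p.1) ∧ φ p = p) := by
    intro p hp
    by_cases h1 : p.1 = v ∧ kP G u v p.2
    · exact Or.inl ⟨h1.1, h1.2, by rw [hφ]; simp only [if_pos h1]⟩
    by_cases h2 : p.2 = v ∧ kP G u v p.1
    · exact Or.inr (Or.inl ⟨h2.1, h2.2, by rw [hφ]; simp only [if_neg h1, if_pos h2]⟩)
    · exact Or.inr (Or.inr ⟨h1, h2, by rw [hφ]; simp only [if_neg h1, if_neg h2]⟩)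
  have hmem : ∀ p ∈ S, φ p ∈ T := by
    intro p hp
    have hpa := hadjS p hp
    have hTmem : ∀ q : V × V, (kelmans G u v).Adj q.1 q.2 → q ∈ T := by
      intro q hq
      rw [hT, Finset.mem_filter]
      exact ⟨Finset.mem_product.mpr ⟨Finset.mem_univ _, Finset.mem_univ _⟩, hq⟩
    rcases hcase p hpa with ⟨h1, hk, he⟩ | ⟨h1, hk, he⟩ | ⟨h1, h2, he⟩
    · apply hTmem; rw [he]
      rw [kelmans_adj]
      exact ⟨fun h => hk.2.1 h.symm, Or.inr (Or.inl ⟨rfl, hk⟩)⟩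
    · apply hTmem; rw [he]
      rw [kelmans_adj]
      exact ⟨hk.2.1, Or.inr (Or.inr ⟨rfl, hk⟩)⟩
    · apply hTmem; rw [he]
      rw [kelmans_adj]
      exact ⟨hpa.ne, Or.inl ⟨hpa, h1, h2⟩⟩
  have hterm : ∀ p ∈ S, (x p.1 + x p.2)^2 ≤ (x (φ p).1 + x (φ p).2)^2 := by
    intro p hp
    have hpa := hadjS p hp
    rcases hcase p hpa with ⟨h1, hk, he⟩ | ⟨h1, hk, he⟩ | ⟨h1, h2, he⟩
    · rw [he, h1]
      exact pow_le_pow_left₀ (add_nonneg (hx v) (hx p.2)) (add_le_add_left huv _) 2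
    · rw [he, h1]
      exact pow_le_pow_left₀ (add_nonneg (hx p.1) (hx v)) (add_le_add_right huv _) 2
    · rw [he]
  have hinj : ∀ p ∈ S, ∀ q ∈ S, φ p = φ q → p = q := by
    intro p hp q hq h
    have hpa := hadjS p hp
    have hqa := hadjS q hq
    rcases hcase p hpa with ⟨h1, hk, he⟩ | ⟨h1, hk, he⟩ | ⟨h1, h2, he⟩ <;>
      rcases hcase q hqa with ⟨g1, gk, ge⟩ | ⟨g1, gk, ge⟩ | ⟨g1, g2, ge⟩ <;>
      rw [he, ge] at h
    · have : p.2 = q.2 := (Prod.ext_iff.mp h).2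
      exact Prod.ext (h1.trans g1.symm) this
    · exfalso
      have h2u : p.2 = u := (Prod.ext_iff.mp h).2
      exact hk.2.1 h2u
    · exfalso
      have : q.1 = u := ((Prod.ext_iff.mp h).1).symm
      have : G.Adj u q.2 := this ▸ hqa
      have h22 : p.2 = q.2 := (Prod.ext_iff.mp h).2
      exact hk.2.2 (h22 ▸ this)
    · exfalso
      have : q.2 = u := ((Prod.ext_iff.mp h).2).symm
      exact gk.2.1 this
    · exact Prod.ext (Prod.ext_iff.mp h).1 (h1.trans g1.symm)
    · exfalso
      have hq2 : q.2 = u := ((Prod.ext_iff.mp h).2).symm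
      have : G.Adj q.1 u := hq2 ▸ hqa
      have h11 : p.1 = q.1 := (Prod.ext_iff.mp h).1
      exact hk.2.2 (G.adj_comm _ _ |>.mp (h11 ▸ this))
    · exfalso
      have : p.1 = u := (Prod.ext_iff.mp h).1
      have : G.Adj u p.2 := this ▸ hpa
      have h22 : p.2 = q.2 := (Prod.ext_iff.mp h).2
      exact gk.2.2 (h22 ▸ this)
    · exfalso
      have hp2 : p.2 = u := (Prod.ext_iff.mp h).2
      have : G.Adj p.1 u := hp2 ▸ hpa
      have h11 : p.1 = q.1 := (Prod.ext_iff.mp h).1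
      exact gk.2.2 (G.adj_comm _ _ |>.mp (h11 ▸ this))
    · exact h
  rw [qform_eq_sum_filter, qform_eq_sum_filter, ← hS, ← hT]
  calc ∑ p ∈ S, (x p.1 + x p.2)^2
      ≤ ∑ p ∈ S, (x (φ p).1 + x (φ p).2)^2 := Finset.sum_le_sum hterm
    _ = ∑ q ∈ S.image φ, (x q.1 + x q.2)^2 := by rw [Finset.sum_image hinj]
    _ ≤ ∑ q ∈ T, (x q.1 + x q.2)^2 :=
        Finset.sum_le_sum_of_subset_of_nonneg
          (Finset.image_subset_iff.2 hmem) (fun q _ _ => sq_nonneg _)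

set_option maxHeartbeats 3000000 in
lemma kelmans_swap {W : Type*} (G : SimpleGraph W) (u v a b : W) :
    (kelmans G v u).Adj a b ↔ (kelmans G u v).Adj (Equiv.swap u v a) (Equiv.swap u v b) := by
  by_cases huv : u = v
  · subst huv; simp [Equiv.swap_self]
  have hvu : ¬ v = u := fun h => huv h.symm
  rw [kelmans_adj, kelmans_adj]
  by_cases hau : a = u
  · have ea : Equiv.swap u v a = v := by rw [hau, Equiv.swap_apply_left]
    by_cases hbu : b = u
    · have eb : Equiv.swap u v b = v := by rw [hbu, Equiv.swap_apply_left]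
      rw [ea, eb, hau, hbu]
      constructor <;> (intro h; exact absurd rfl h.1)
    by_cases hbv : b = v
    · have eb : Equiv.swap u v b = u := by rw [hbv, Equiv.swap_apply_right]
      rw [ea, eb, hau, hbv]
      have h2 := G.adj_comm u v
      simp only [kP, ne_eq, SimpleGraph.irrefl]; tauto
    · have eb : Equiv.swap u v b = b := Equiv.swap_apply_of_ne_of_ne hbu hbv
      have hub : ¬ u = b := fun h => hbu h.symm
      have hvb : ¬ v = b := fun h => hbv h.symm
      rw [ea, eb, hau]
      simp only [kP, ne_eq, SimpleGraph.irrefl]; tauto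
  by_cases hav : a = v
  · have ea : Equiv.swap u v a = u := by rw [hav, Equiv.swap_apply_right]
    by_cases hbu : b = u
    · have eb : Equiv.swap u v b = v := by rw [hbu, Equiv.swap_apply_left]
      rw [ea, eb, hav, hbu]
      have h2 := G.adj_comm u v
      simp only [kP, ne_eq, SimpleGraph.irrefl]; tauto
    by_cases hbv : b = v
    · have eb : Equiv.swap u v b = u := by rw [hbv, Equiv.swap_apply_right]
      rw [ea, eb, hav, hbv]
      constructor <;> (intro h; exact absurd rfl h.1)
    · have eb : Equiv.swap u v b = b := Equiv.swap_apply_of_ne_of_ne hbu hbv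
      have hub : ¬ u = b := fun h => hbu h.symm
      have hvb : ¬ v = b := fun h => hbv h.symm
      rw [ea, eb, hav]
      simp only [kP, ne_eq, SimpleGraph.irrefl]; tauto
  · have ea : Equiv.swap u v a = a := Equiv.swap_apply_of_ne_of_ne hau hav
    have hua : ¬ u = a := fun h => hau h.symm
    have hva : ¬ v = a := fun h => hav h.symm
    by_cases hbu : b = u
    · have eb : Equiv.swap u v b = v := by rw [hbu, Equiv.swap_apply_left]
      rw [ea, eb, hbu]
      have h5 := G.adj_comm u a
      have h6 := G.adj_comm v a
      simp only [kP, ne_eq, SimpleGraph.irrefl]; tauto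
    by_cases hbv : b = v
    · have eb : Equiv.swap u v b = u := by rw [hbv, Equiv.swap_apply_right]
      rw [ea, eb, hbv]
      have h5 := G.adj_comm u a
      have h6 := G.adj_comm v a
      simp only [kP, ne_eq, SimpleGraph.irrefl]; tauto
    · have eb : Equiv.swap u v b = b := Equiv.swap_apply_of_ne_of_ne hbu hbv
      have hub : ¬ u = b := fun h => hbu h.symm
      have hvb : ¬ v = b := fun h => hbv h.symm
      rw [ea, eb]
      simp only [kP, ne_eq, SimpleGraph.irrefl]; tauto

lemma qform_swap (G : SimpleGraph V) (u v : V) (y : V → ℝ) :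
    qform (kelmans G v u) y = qform (kelmans G u v) (fun i => y (Equiv.swap u v i)) := by
  rw [qform, qform]
  simp only [kelmans_swap G u v]
  refine Fintype.sum_equiv (Equiv.swap u v) _ _ (fun i => ?_)
  refine Fintype.sum_equiv (Equiv.swap u v) _ _ (fun j => ?_)
  rw [Equiv.swap_apply_self, Equiv.swap_apply_self]
  congr!

lemma dot_swap (u v : V) (y : V → ℝ) :
    (fun i => y (Equiv.swap u v i)) ⬝ᵥ (fun i => y (Equiv.swap u v i)) = y ⬝ᵥ y := by
  rw [dotProduct, dotProduct]
  exact Equiv.sum_comp (Equiv.swap u v) (fun i => y i * y i)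

end Aux

/-- **Lemma 2.3.** The signless Laplacian spectral radius does not decrease under a
Kelmans transformation: `q(G) ≤ q(G*)`. -/
theorem qrad_le_qrad_kelmans {V : Type*} [Fintype V] [DecidableEq V]
    (G : SimpleGraph V) (u v : V) :
    qrad G ≤ qrad (kelmans G u v) := by
  classical
  rcases isEmpty_or_nonempty V with hV | hV
  · rw [qrad, qrad, spec_eq_range (lap_herm G), spec_eq_range (lap_herm (kelmans G u v)),
      Set.range_eq_empty, Set.range_eq_empty]
  · -- Perron step: get a nonnegative unit vector achieving qrad G
    obtain ⟨x, hx1, hx2⟩ := rayleigh_lower (lap_herm G)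
    set y : V → ℝ := fun i => |x i| with hy
    have hy1 : y ⬝ᵥ y = 1 := by
      rw [← hx1, dotProduct, dotProduct]
      exact Finset.sum_congr rfl fun i _ => by rw [hy]; simp [abs_mul_abs_self]
    have hy0 : ∀ i, 0 ≤ y i := fun i => abs_nonneg _
    have hy2 : qrad G ≤ y ⬝ᵥ (signlessLap G *ᵥ y) :=
      le_trans hx2 (dot_abs_le (lap_nonneg G) x)
    by_cases hcmp : y v ≤ y u
    · -- move mass to u directly
      have hq1 : qform G y ≤ qform (kelmans G u v) y := qform_le_kelmans G u v y hy0 hcmp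
      have hq2 : y ⬝ᵥ (signlessLap (kelmans G u v) *ᵥ y) ≤ qrad (kelmans G u v) :=
        rayleigh_upper (lap_herm _) y hy1
      have e1 := two_dot_eq_qform G y
      have e2 := two_dot_eq_qform (kelmans G u v) y
      simp only [qrad] at hy2 hq2 ⊢
      linarith
    · have hcmp' : y u ≤ y v := le_of_not_ge hcmp
      have hq1 : qform G y ≤ qform (kelmans G v u) y := qform_le_kelmans G v u y hy0 hcmp'
      obtain ⟨z, hzdef⟩ : ∃ z : V → ℝ, z = fun i => y (Equiv.swap u v i) := ⟨_, rfl⟩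
      have hq3 : qform (kelmans G v u) y = qform (kelmans G u v) z := by
        rw [hzdef]; exact qform_swap G u v y
      have hz1 : z ⬝ᵥ z = 1 := by rw [hzdef, dot_swap u v y]; exact hy1
      have hq2 : z ⬝ᵥ (signlessLap (kelmans G u v) *ᵥ z) ≤ qrad (kelmans G u v) :=
        rayleigh_upper (lap_herm _) z hz1
      have e1 := two_dot_eq_qform G y
      have e2 := two_dot_eq_qform (kelmans G u v) z
      simp only [qrad] at hy2 hq2 ⊢
      linarith

end
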